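/- Let 𝓛 be the lamplighter group, F̃_n = {(t, K) ∈ 𝓛 : t ∈ [0,n]∩ℤ and K ⊆ [0,n]∩ℤ}, and F_n = (F̃_n)⁻¹ · F̃_n. Then for every n ≥ 0, |F_n| = 2^n · (n² + 4n + 2). -/

import Mathlib

open scoped symmDiff

/-- The lamplighter group `ℤ ≀ ℤ₂`, realized as pairs `(t, K)` with `t ∈ ℤ` the
position of the lamplighter and `K` a finite set of integers (the lamps turned on). -/
structure Lamp where
  pos : ℤ
  lamps : Finset ℤ
deriving DecidableEq

namespace Lamp

/-- The shift `t + K` of a finite set of integers. -/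
def shift (t : ℤ) (K : Finset ℤ) : Finset ℤ := K.image (t + ·)

lemma mem_shift {t x : ℤ} {K : Finset ℤ} : x ∈ shift t K ↔ x - t ∈ K := by
  constructor
  · rintro h
    simp only [shift, Finset.mem_image] at h
    obtain ⟨k, hk, rfl⟩ := h
    simpa using hk
  · intro h
    simp only [shift, Finset.mem_image]
    exact ⟨x - t, h, by ring⟩

lemma shift_symmDiff (t : ℤ) (A B : Finset ℤ) :
    shift t (A ∆ B) = shift t A ∆ shift t B := by
  ext x
  simp [mem_shift, Finset.mem_symmDiff]

lemma shift_shift (s t : ℤ) (K : Finset ℤ) : shift s (shift t K) = shift (s + t) K := by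
  ext x
  simp [mem_shift, sub_sub]

lemma shift_zero (K : Finset ℤ) : shift 0 K = K := by
  ext x; simp [mem_shift]

lemma shift_empty (t : ℤ) : shift t (∅ : Finset ℤ) = ∅ := by
  simp [shift]

lemma empty_symmDiff (A : Finset ℤ) : (∅ : Finset ℤ) ∆ A = A := by
  ext x; simp [Finset.mem_symmDiff]

lemma symmDiff_empty (A : Finset ℤ) : A ∆ (∅ : Finset ℤ) = A := by
  ext x; simp [Finset.mem_symmDiff]

lemma symmDiff_self' (A : Finset ℤ) : A ∆ A = (∅ : Finset ℤ) := by
  ext x; simp [Finset.mem_symmDiff]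

instance : Mul Lamp := ⟨fun a b => ⟨a.pos + b.pos, a.lamps ∆ shift a.pos b.lamps⟩⟩
instance : One Lamp := ⟨⟨0, ∅⟩⟩
instance : Inv Lamp := ⟨fun a => ⟨-a.pos, shift (-a.pos) a.lamps⟩⟩

@[simp] lemma mul_pos' (a b : Lamp) : (a * b).pos = a.pos + b.pos := rfl
@[simp] lemma mul_lamps (a b : Lamp) : (a * b).lamps = a.lamps ∆ shift a.pos b.lamps := rfl
@[simp] lemma one_pos' : (1 : Lamp).pos = 0 := rfl
@[simp] lemma one_lamps : (1 : Lamp).lamps = ∅ := rfl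
@[simp] lemma inv_pos' (a : Lamp) : a⁻¹.pos = -a.pos := rfl
@[simp] lemma inv_lamps (a : Lamp) : a⁻¹.lamps = shift (-a.pos) a.lamps := rfl

@[ext] lemma ext' {a b : Lamp} (h1 : a.pos = b.pos) (h2 : a.lamps = b.lamps) : a = b := by
  cases a; cases b; simp_all

instance : Group Lamp where
  mul_assoc a b c := by
    refine ext' ?_ ?_
    · simp [add_assoc]
    · simp [shift_symmDiff, shift_shift, symmDiff_assoc]
  one_mul a := by
    refine ext' ?_ ?_
    · simp
    · rw [mul_lamps, one_lamps, one_pos', shift_zero, empty_symmDiff]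
  mul_one a := by
    refine ext' ?_ ?_
    · simp
    · rw [mul_lamps, one_lamps, shift_empty, symmDiff_empty]
  inv_mul_cancel a := by
    refine ext' ?_ ?_
    · simp
    · rw [mul_lamps, inv_lamps, inv_pos', symmDiff_self', one_lamps]

/-- The standard right Følner sets `F̃ n` of the lamplighter group. -/
def Ftilde (n : ℕ) : Set Lamp :=
  {x | x.pos ∈ Set.Icc (0 : ℤ) n ∧ ∀ k ∈ x.lamps, k ∈ Set.Icc (0 : ℤ) n}

end Lamp

open Pointwise

/-- The two-sided Følner sets `F n = (F̃ n)⁻¹ · F̃ n` of the lamplighter group. -/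
def Lamp.F (n : ℕ) : Set Lamp := (Lamp.Ftilde n)⁻¹ * Lamp.Ftilde n


section Aux
open Lamp

theorem count_main (n : ℕ) : ∀ (k : ℕ) (a : ℤ),
    (((Finset.Icc a (a + n + k)).powerset).filter
      (fun L => ∀ x ∈ L, ∀ y ∈ L, x - y ≤ (n:ℤ))).card = (k + 2) * 2 ^ n := by
  intro k
  induction k with
  | zero =>
    intro a
    simp only [Nat.cast_zero, add_zero]
    rw [Finset.filter_true_of_mem]
    · rw [Finset.card_powerset, Int.card_Icc]
      have : (a + n + 1 - a).toNat = n + 1 := by omega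
      rw [this]
      ring
    · intro L hL x hx y hy
      rw [Finset.mem_powerset] at hL
      have h1 := hL hx
      have h2 := hL hy
      rw [Finset.mem_Icc] at h1 h2
      omega
  | succ k ih =>
    intro a
    have heq : (a : ℤ) + n + ((k+1:ℕ):ℤ) = a + 1 + n + k := by push_cast; ring
    rw [heq]
    have key := Finset.card_filter_add_card_filter_not
      (s := ((Finset.Icc a (a + 1 + n + k :ℤ)).powerset).filter
        (fun L => ∀ x ∈ L, ∀ y ∈ L, x - y ≤ (n:ℤ)))
      (p := fun L => a ∈ L)
    have hA : (((Finset.Icc a (a + 1 + n + k :ℤ)).powerset).filter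
        (fun L => ∀ x ∈ L, ∀ y ∈ L, x - y ≤ (n:ℤ))).filter (fun L => a ∈ L)
        = ((Finset.Icc a (a + n)).powerset).filter (fun L => a ∈ L) := by
      ext L
      simp only [Finset.mem_filter, Finset.mem_powerset]
      constructor
      · rintro ⟨⟨hsub, hd⟩, ha⟩
        refine ⟨fun x hx => ?_, ha⟩
        have h1 := hsub hx
        have h2 := hd x hx a ha
        rw [Finset.mem_Icc] at h1 ⊢
        omega
      · rintro ⟨hsub, ha⟩
        refine ⟨⟨fun x hx => ?_, fun x hx y hy => ?_⟩, ha⟩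
        · have h1 := hsub hx
          rw [Finset.mem_Icc] at h1 ⊢
          omega
        · have h1 := hsub hx
          have h2 := hsub hy
          rw [Finset.mem_Icc] at h1 h2
          omega
    have hB : (((Finset.Icc a (a + 1 + n + k :ℤ)).powerset).filter
        (fun L => ∀ x ∈ L, ∀ y ∈ L, x - y ≤ (n:ℤ))).filter (fun L => ¬ a ∈ L)
        = ((Finset.Icc (a+1) ((a+1) + n + k)).powerset).filter
          (fun L => ∀ x ∈ L, ∀ y ∈ L, x - y ≤ (n:ℤ)) := by
      ext L
      simp only [Finset.mem_filter, Finset.mem_powerset]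
      constructor
      · rintro ⟨⟨hsub, hd⟩, ha⟩
        refine ⟨fun x hx => ?_, hd⟩
        have h1 := hsub hx
        rw [Finset.mem_Icc] at h1 ⊢
        have : x ≠ a := fun h => ha (h ▸ hx)
        omega
      · rintro ⟨hsub, hd⟩
        have hnot : a ∉ L := fun h => by
          have := hsub h; rw [Finset.mem_Icc] at this; omega
        refine ⟨⟨fun x hx => ?_, hd⟩, hnot⟩
        have h1 := hsub hx
        rw [Finset.mem_Icc] at h1 ⊢
        omega
    have hAcard : (((Finset.Icc a (a + n)).powerset).filter (fun L => a ∈ L)).card = 2 ^ n := by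
      have himg : ((Finset.Icc a (a + n)).powerset).filter (fun L => a ∈ L)
          = ((Finset.Icc (a+1) (a + n)).powerset).image (insert a) := by
        ext L
        simp only [Finset.mem_filter, Finset.mem_powerset, Finset.mem_image]
        constructor
        · rintro ⟨hsub, ha⟩
          refine ⟨L.erase a, fun x hx => ?_, by simp [Finset.insert_erase ha]⟩
          have hx' := Finset.mem_of_mem_erase hx
          have hne := Finset.ne_of_mem_erase hx
          have := hsub hx'
          rw [Finset.mem_Icc] at this ⊢
          omega
        · rintro ⟨M, hM, rfl⟩
          constructor
          · intro x hx
            rcases Finset.mem_insert.mp hx with rfl | hx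
            · rw [Finset.mem_Icc]; omega
            · have := hM hx; rw [Finset.mem_Icc] at this ⊢; omega
          · exact Finset.mem_insert_self a M
      rw [himg, Finset.card_image_of_injOn, Finset.card_powerset, Int.card_Icc]
      · congr 1; omega
      · intro M1 h1 M2 h2 hins
        rw [Finset.mem_coe, Finset.mem_powerset] at h1 h2
        have ha1 : a ∉ M1 := fun h => by
          have := h1 h; rw [Finset.mem_Icc] at this; omega
        have ha2 : a ∉ M2 := fun h => by
          have := h2 h; rw [Finset.mem_Icc] at this; omega
        have := congrArg (Finset.erase · a) hins
        simpa [Finset.erase_insert ha1, Finset.erase_insert ha2] using this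
    have hIH : (((Finset.Icc (a+1) ((a+1) + n + k)).powerset).filter
        (fun L => ∀ x ∈ L, ∀ y ∈ L, x - y ≤ (n:ℤ))).card = (k + 2) * 2 ^ n := ih (a+1)
    rw [hA, hB] at key
    have hIH' : (((Finset.Icc (a+1) (a + 1 + n + k)).powerset).filter
        (fun L => ∀ x ∈ L, ∀ y ∈ L, x - y ≤ (n:ℤ))).card = (k + 2) * 2 ^ n := by
      rw [show (a:ℤ) + 1 + n + k = (a+1) + n + k by ring]; exact hIH
    rw [hAcard, hIH'] at key
    rw [← key]; ring

noncomputable def lampSet (n : ℕ) (s : ℤ) : Finset (Finset ℤ) :=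
  ((Finset.Icc (max s 0 - n) (min s 0 + n)).powerset).filter
    (fun L => ∀ x ∈ L, ∀ y ∈ L, x - y ≤ (n:ℤ))

noncomputable def cand (n : ℕ) : Finset Lamp :=
  (Finset.Icc (-(n:ℤ)) n).biUnion (fun s => (lampSet n s).image (fun L => ⟨s, L⟩))

lemma mem_cand {n : ℕ} {z : Lamp} :
    z ∈ cand n ↔ z.pos ∈ Finset.Icc (-(n:ℤ)) n ∧ z.lamps ∈ lampSet n z.pos := by
  simp only [cand, Finset.mem_biUnion, Finset.mem_image]
  constructor
  · rintro ⟨s, hs, L, hL, rfl⟩; exact ⟨hs, hL⟩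
  · rintro ⟨h1, h2⟩; exact ⟨z.pos, h1, z.lamps, h2, rfl⟩

lemma lampSet_card (n : ℕ) {s : ℤ} (hs : s ∈ Finset.Icc (-(n:ℤ)) n) :
    (lampSet n s).card = (n - s.natAbs + 2) * 2 ^ n := by
  rw [Finset.mem_Icc] at hs
  have h1 : (min s 0 + n : ℤ) = (max s 0 - n) + n + ((n - s.natAbs : ℕ) : ℤ) := by
    omega
  rw [lampSet, h1, count_main]

lemma sum_abs (n : ℕ) : (∑ s ∈ Finset.Icc (-(n:ℤ)) n, (n - s.natAbs + 2)) = n ^ 2 + 4 * n + 2 := by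
  induction n with
  | zero => simp
  | succ n ih =>
    have hset : Finset.Icc (-((n+1:ℕ):ℤ)) ((n+1:ℕ):ℤ)
        = insert (-((n+1:ℕ):ℤ)) (insert ((n+1:ℕ):ℤ) (Finset.Icc (-(n:ℕ):ℤ) (n:ℕ))) := by
      ext x
      simp only [Finset.mem_Icc, Finset.mem_insert]
      push_cast
      omega
    have h1 : (-((n+1:ℕ):ℤ)) ∉ insert ((n+1:ℕ):ℤ) (Finset.Icc (-(n:ℕ):ℤ) (n:ℕ)) := by
      simp only [Finset.mem_insert, Finset.mem_Icc]
      push_cast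
      omega
    have h2 : ((n+1:ℕ):ℤ) ∉ Finset.Icc (-(n:ℕ):ℤ) (n:ℕ) := by
      simp only [Finset.mem_Icc]
      push_cast
      omega
    rw [hset, Finset.sum_insert h1, Finset.sum_insert h2]
    have hterm : ∀ s ∈ Finset.Icc (-(n:ℕ):ℤ) (n:ℕ),
        ((n+1) - s.natAbs + 2) = (n - s.natAbs + 2) + 1 := by
      intro s hs
      rw [Finset.mem_Icc] at hs
      omega
    rw [Finset.sum_congr rfl hterm, Finset.sum_add_distrib, ih, Finset.sum_const,
      Int.card_Icc]
    have hcard : ((n:ℤ) + 1 - -(n:ℤ)).toNat = 2 * n + 1 := by omega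
    have hna1 : ((-((n+1:ℕ):ℤ)).natAbs) = n + 1 := by
      rw [Int.natAbs_neg, Int.natAbs_natCast]
    have hna2 : (((n+1:ℕ):ℤ)).natAbs = n + 1 := Int.natAbs_natCast _
    rw [hcard, hna1, hna2]
    have hsq : (n+1)^2 = n^2 + 2*n + 1 := by ring
    rw [hsq]
    simp only [smul_eq_mul]
    omega

lemma cand_card (n : ℕ) : (cand n).card = 2 ^ n * (n ^ 2 + 4 * n + 2) := by
  rw [cand, Finset.card_biUnion]
  · have hterm : ∀ s ∈ Finset.Icc (-(n:ℤ)) n,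
        ((lampSet n s).image (fun L => (⟨s, L⟩ : Lamp))).card = (n - s.natAbs + 2) * 2 ^ n := by
      intro s hs
      rw [Finset.card_image_of_injective _ (fun a b h => congrArg Lamp.lamps h),
        lampSet_card n hs]
    rw [Finset.sum_congr rfl hterm, ← Finset.sum_mul, sum_abs, mul_comm]
  · intro s1 _ s2 _ hne
    rw [Function.onFun, Finset.disjoint_left]
    intro z hz1 hz2
    simp only [Finset.mem_image] at hz1 hz2
    obtain ⟨L1, _, rfl⟩ := hz1
    obtain ⟨L2, _, h⟩ := hz2
    exact hne (congrArg Lamp.pos h).symm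

lemma F_eq_cand (n : ℕ) : Lamp.F n = ↑(cand n) := by
  ext z
  rw [Finset.mem_coe, mem_cand]
  constructor
  · rintro ⟨x, hx, y, hy, rfl⟩
    rw [Set.mem_inv] at hx
    obtain ⟨hx1, hx2⟩ := hx
    obtain ⟨hy1, hy2⟩ := hy
    rw [Lamp.inv_pos', Set.mem_Icc] at hx1
    rw [Set.mem_Icc] at hy1
    have hwin : ∀ k ∈ (x * y).lamps, x.pos ≤ k ∧ k ≤ x.pos + n := by
      intro k hk
      rw [Lamp.mul_lamps, Finset.mem_symmDiff] at hk
      rcases hk with ⟨hk, _⟩ | ⟨hk, _⟩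
      · have : k - x.pos ∈ x⁻¹.lamps := by
          rw [Lamp.inv_lamps, Lamp.mem_shift]
          simpa using hk
        have := hx2 _ this
        rw [Set.mem_Icc] at this
        omega
      · rw [Lamp.mem_shift] at hk
        have := hy2 _ hk
        rw [Set.mem_Icc] at this
        omega
    refine ⟨?_, ?_⟩
    · rw [Lamp.mul_pos', Finset.mem_Icc]; omega
    · rw [lampSet, Finset.mem_filter, Finset.mem_powerset]
      refine ⟨fun k hk => ?_, fun a ha b hb => ?_⟩
      · have := hwin k hk
        rw [Finset.mem_Icc, Lamp.mul_pos']
        omega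
      · have h1 := hwin a ha
        have h2 := hwin b hb
        omega
  · rintro ⟨hpos, hl⟩
    rw [Finset.mem_Icc] at hpos
    rw [lampSet, Finset.mem_filter, Finset.mem_powerset] at hl
    obtain ⟨hsub, hd⟩ := hl
    -- choose t1
    obtain ht1 : ∃ t1 : ℤ, 0 ≤ t1 ∧ t1 ≤ n ∧ 0 ≤ t1 + z.pos ∧ t1 + z.pos ≤ n ∧
        ∀ k ∈ z.lamps, 0 ≤ t1 + k ∧ t1 + k ≤ n := by
      rcases z.lamps.eq_empty_or_nonempty with he | hne
      · exact ⟨max 0 (-z.pos), by omega, by omega, by omega, by omega,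
          fun k hk => by rw [he] at hk; exact absurd hk (Finset.notMem_empty k)⟩
      · set μ := z.lamps.min' hne with hμdef
        set M := z.lamps.max' hne with hMdef
        have hμ := hsub (z.lamps.min'_mem hne)
        have hM := hsub (z.lamps.max'_mem hne)
        rw [Finset.mem_Icc] at hμ hM
        have hdm : M - μ ≤ n := hd _ (z.lamps.max'_mem hne) _ (z.lamps.min'_mem hne)
        refine ⟨max (max 0 (-z.pos)) (-μ), by omega, by omega, by omega, by omega,
          fun k hk => ?_⟩
        have h1 : μ ≤ k := z.lamps.min'_le k hk
        have h2 : k ≤ M := z.lamps.le_max' k hk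
        omega
    obtain ⟨t1, h0, h1, h2, h3, h4⟩ := ht1
    refine ⟨(⟨t1, ∅⟩ : Lamp)⁻¹, ?_, ⟨t1 + z.pos, Lamp.shift t1 z.lamps⟩, ?_, ?_⟩
    · rw [Set.mem_inv, inv_inv]
      exact ⟨Set.mem_Icc.mpr ⟨h0, h1⟩, fun k hk => absurd hk (Finset.notMem_empty k)⟩
    · refine ⟨Set.mem_Icc.mpr ⟨h2, h3⟩, fun k hk => ?_⟩
      rw [Lamp.mem_shift] at hk
      have := h4 _ hk
      rw [Set.mem_Icc]
      omega
    · refine Lamp.ext' ?_ ?_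
      · simp
      · rw [Lamp.mul_lamps, Lamp.inv_lamps, Lamp.inv_pos',
          Lamp.shift_empty, Lamp.empty_symmDiff, Lamp.shift_shift]
        simp [Lamp.shift_zero]

end Aux

/-- The cardinality of `F n = (F̃ n)⁻¹ F̃ n` is `2^n (n² + 4n + 2)`. -/
theorem stmt14 (n : ℕ) :
    (Lamp.F n).ncard = 2 ^ n * (n ^ 2 + 4 * n + 2) := by
  rw [F_eq_cand, Set.ncard_coe_finset, cand_card]
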